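/- arXiv:2308.06008 — 7 statements merged into one kernel-verified Lean document; each statement's English description precedes it below -/
import Mathlib

section
/- If p and q are distinct primes both congruent to 3 mod 4, then the 2×2 diagonal matrices p·I₂ and q·I₂ are not congruent over ℚ. -/
open Matrix

private lemma rat_clear_den (c d : ℚ) :
    c * ((c.den * d.den : ℕ) : ℚ) = ((c.num * d.den : ℤ) : ℚ) := by
  push_cast
  rw [← mul_assoc, Rat.mul_den_eq_num]

theorem pI2_not_congruent_qI2 (p q : ℕ) (hp : p.Prime) (hq : q.Prime) (hpq : p ≠ q)
    (hp3 : p % 4 = 3) (hq3 : q % 4 = 3) :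
    ¬ ∃ M : Matrix (Fin 2) (Fin 2) ℚ, IsUnit M ∧
      Mᵀ * ((p : ℚ) • (1 : Matrix (Fin 2) (Fin 2) ℚ)) * M =
        (q : ℚ) • (1 : Matrix (Fin 2) (Fin 2) ℚ) := by
  rintro ⟨M, _, h⟩
  haveI : Fact p.Prime := ⟨hp⟩
  have key := congrArg (fun A : Matrix (Fin 2) (Fin 2) ℚ => A 0 0) h
  simp [Matrix.mul_apply, Fin.sum_univ_two, Matrix.smul_apply, Matrix.one_apply,
    Matrix.transpose_apply] at key
  obtain ⟨a, b, key⟩ : ∃ a b : ℚ, (p : ℚ) * (a * a + b * b) = q :=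
    ⟨M 0 0, M 1 0, by linear_combination key⟩
  have hpq2 : (p : ℚ) * (q : ℚ) = ((p:ℚ) * a) ^ 2 + ((p:ℚ) * b) ^ 2 := by nlinarith [key]
  obtain ⟨c, d, hpq2⟩ : ∃ c d : ℚ, (p : ℚ) * (q : ℚ) = c ^ 2 + d ^ 2 :=
    ⟨(p:ℚ) * a, (p:ℚ) * b, hpq2⟩
  set m : ℕ := c.den * d.den with hm
  have hm0 : m ≠ 0 := Nat.mul_ne_zero c.den_nz d.den_nz
  set X : ℤ := c.num * (d.den : ℤ) with hX
  set Y : ℤ := d.num * (c.den : ℤ) with hY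
  have hcm : c * (m : ℚ) = (X : ℚ) := by
    have := rat_clear_den c d; push_cast at this ⊢; rw [hm, hX]; push_cast; exact this
  have hdm : d * (m : ℚ) = (Y : ℚ) := by
    have := rat_clear_den d c; push_cast at this ⊢; rw [hm, hY]; push_cast
    rw [mul_comm (c.den:ℚ) (d.den:ℚ)]; exact this
  have hint : ((p * q * m ^ 2 : ℕ) : ℚ) = (X:ℚ) ^ 2 + (Y:ℚ) ^ 2 := by
    push_cast
    rw [← hcm, ← hdm]
    nlinarith [hpq2]
  have hint' : ((p * q * m ^ 2 : ℕ) : ℤ) = X ^ 2 + Y ^ 2 := by exact_mod_cast hint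
  have hnat : p * q * m ^ 2 = X.natAbs ^ 2 + Y.natAbs ^ 2 := by
    have : ((p * q * m ^ 2 : ℕ) : ℤ) = ((X.natAbs ^ 2 + Y.natAbs ^ 2 : ℕ) : ℤ) := by
      push_cast only [Nat.cast_add, Nat.cast_pow, Int.natAbs_sq]
      exact hint'
    exact_mod_cast this
  have heven : Even (padicValNat p (p * q * m ^ 2)) :=
    Nat.eq_sq_add_sq_iff.mp ⟨X.natAbs, Y.natAbs, hnat⟩ p (Nat.mem_primeFactors.mpr ⟨hp,
      dvd_mul_of_dvd_left (dvd_mul_right p q) _,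
      Nat.mul_ne_zero (Nat.mul_ne_zero hp.ne_zero hq.ne_zero) (pow_ne_zero 2 hm0)⟩) hp3
  have hpq' : ¬ p ∣ q := fun hdvd => hpq ((Nat.prime_dvd_prime_iff_eq hp hq).mp hdvd)
  have hval : padicValNat p (p * q * m ^ 2) = 1 + 2 * padicValNat p m := by
    rw [padicValNat.mul (Nat.mul_ne_zero hp.ne_zero hq.ne_zero) (pow_ne_zero 2 hm0),
      padicValNat.mul hp.ne_zero hq.ne_zero, padicValNat.self hp.one_lt,
      padicValNat.eq_zero_of_not_dvd hpq', padicValNat.pow m 2]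
  rw [hval] at heven
  obtain ⟨r, hr⟩ := heven
  omega
end

section
/- Let r₃(n) denote the product of all primes congruent to 3 mod 4 dividing the square-free part of a positive integer n. For positive integers m, n, the rational quadratic forms n·I₂ and m·I₂ are congruent over ℚ if and only if r₃(n) = r₃(m). -/
open Matrix

/-- The product of all primes congruent to 3 mod 4 dividing the square-free
part of `n`, i.e. the primes `p ≡ 3 [MOD 4]` occurring with odd exponent in `n`. -/
def r3 (n : ℕ) : ℕ :=
  ∏ p ∈ n.primeFactors, if p % 4 = 3 ∧ Odd (n.factorization p) then p else 1

lemma r3_prod_subset {n : ℕ} {s : Finset ℕ} (hs : n.primeFactors ⊆ s) :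
    r3 n = ∏ p ∈ s, if p % 4 = 3 ∧ Odd (n.factorization p) then p else 1 := by
  refine Finset.prod_subset hs fun p _ hpn => ?_
  have h0 : n.factorization p = 0 := by
    rwa [← Nat.support_factorization, Finsupp.notMem_support_iff] at hpn
  simp [h0]

lemma r3_eq_of_parity {n m : ℕ} (hn : n ≠ 0) (hm : m ≠ 0)
    (h : ∀ q : ℕ, q.Prime → q % 4 = 3 →
      (Odd (n.factorization q) ↔ Odd (m.factorization q))) : r3 n = r3 m := by
  rw [r3_prod_subset (s := n.primeFactors ∪ m.primeFactors) Finset.subset_union_left,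
    r3_prod_subset (s := n.primeFactors ∪ m.primeFactors) Finset.subset_union_right]
  refine Finset.prod_congr rfl fun p hp => ?_
  have hpp : p.Prime :=
    (Finset.mem_union.1 hp).elim Nat.prime_of_mem_primeFactors Nat.prime_of_mem_primeFactors
  by_cases h4 : p % 4 = 3
  · by_cases ho : Odd (n.factorization p)
    · simp [h4, ho, (h p hpp h4).mp ho]
    · simp [h4, ho, mt (h p hpp h4).mpr ho]
  · simp [h4]

lemma prime_dvd_r3_iff {q : ℕ} (hq : q.Prime) (n : ℕ) :
    q ∣ r3 n ↔ q % 4 = 3 ∧ Odd (n.factorization q) := by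
  constructor
  · intro h
    obtain ⟨p, hp, hdvd⟩ := (hq.prime.dvd_finset_prod_iff _).mp h
    by_cases hc : p % 4 = 3 ∧ Odd (n.factorization p)
    · rw [if_pos hc] at hdvd
      obtain rfl := (Nat.prime_dvd_prime_iff_eq hq (Nat.prime_of_mem_primeFactors hp)).mp hdvd
      exact hc
    · rw [if_neg hc] at hdvd
      exact absurd (Nat.dvd_one.mp hdvd) hq.ne_one
  · rintro ⟨h4, ho⟩
    have hne : n.factorization q ≠ 0 := fun h0 => by simp [h0] at ho
    have hn0 : n ≠ 0 := by rintro rfl; simp at hne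
    have hqn : q ∈ n.primeFactors :=
      Nat.mem_primeFactors.mpr ⟨hq, Nat.dvd_of_factorization_pos hne, hn0⟩
    have := Finset.dvd_prod_of_mem
      (fun p => if p % 4 = 3 ∧ Odd (n.factorization p) then p else 1) hqn
    rw [if_pos (show q % 4 = 3 ∧ Odd (n.factorization q) from ⟨h4, ho⟩)] at this
    exact this

theorem nI2_congruent_mI2_iff_r3_eq (n m : ℕ) (hn : 0 < n) (hm : 0 < m) :
    (∃ M : Matrix (Fin 2) (Fin 2) ℚ, IsUnit M ∧
      Mᵀ * ((n : ℚ) • (1 : Matrix (Fin 2) (Fin 2) ℚ)) * M =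
        (m : ℚ) • (1 : Matrix (Fin 2) (Fin 2) ℚ)) ↔ r3 n = r3 m := by
  have hn0 : (n : ℚ) ≠ 0 := Nat.cast_ne_zero.mpr hn.ne'
  have hm0 : (m : ℚ) ≠ 0 := Nat.cast_ne_zero.mpr hm.ne'
  constructor
  · rintro ⟨M, hM, hMe⟩
    set a := M 0 0 with ha
    set c := M 1 0 with hc
    have h00 : (n : ℚ) * (a * a + c * c) = m := by
      have := congrFun (congrFun hMe 0) 0
      simp [Matrix.mul_apply, Fin.sum_univ_two, Matrix.one_apply, ← ha, ← hc] at this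
      linarith [this]
    -- clear denominators
    set X : ℤ := (n : ℤ) * c.den * a.num with hX
    set Y : ℤ := (n : ℤ) * a.den * c.num with hY
    have hda : (a.den : ℚ) ≠ 0 := Nat.cast_ne_zero.mpr a.den_nz
    have hdc : (c.den : ℚ) ≠ 0 := Nat.cast_ne_zero.mpr c.den_nz
    have hanum : (a.num : ℚ) = a * a.den := (Rat.mul_den_eq_num a).symm
    have hcnum : (c.num : ℚ) = c * c.den := (Rat.mul_den_eq_num c).symm
    have key : ((X ^ 2 + Y ^ 2 : ℤ) : ℚ) = ((n * m * (a.den * c.den) ^ 2 : ℕ) : ℚ) := by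
      push_cast [hX, hY, hanum, hcnum]
      linear_combination ((n : ℚ) * ((a.den : ℚ) * c.den) ^ 2) * h00
    have keyZ : X ^ 2 + Y ^ 2 = ((n * m * (a.den * c.den) ^ 2 : ℕ) : ℤ) := by
      exact_mod_cast key
    have keyN : n * m * (a.den * c.den) ^ 2 = X.natAbs ^ 2 + Y.natAbs ^ 2 := by
      have : ((X.natAbs ^ 2 + Y.natAbs ^ 2 : ℕ) : ℤ) = X ^ 2 + Y ^ 2 := by
        push_cast [sq_abs, Int.natAbs_sq]
        simp [Int.natAbs_sq]
      omega
    refine r3_eq_of_parity hn.ne' hm.ne' fun q hq h4 => ?_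
    haveI : Fact q.Prime := ⟨hq⟩
    have hk : a.den * c.den ≠ 0 := Nat.mul_ne_zero a.den_nz c.den_nz
    have hE : Even (padicValNat q (n * m * (a.den * c.den) ^ 2)) := by
      by_cases hmem : q ∈ (n * m * (a.den * c.den) ^ 2).primeFactors
      · exact Nat.eq_sq_add_sq_iff.mp ⟨X.natAbs, Y.natAbs, keyN⟩ q hmem h4
      · rw [← Nat.factorization_def _ hq, Finsupp.notMem_support_iff.mp (by rwa [Nat.support_factorization])]
        exact Even.zero
    rw [padicValNat.mul (Nat.mul_ne_zero hn.ne' hm.ne') (pow_ne_zero _ hk),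
      padicValNat.pow _ _, padicValNat.mul hn.ne' hm.ne', Nat.even_iff] at hE
    rw [Nat.factorization_def n hq, Nat.factorization_def m hq, Nat.odd_iff, Nat.odd_iff]
    omega
  · intro heq
    have hpar : ∀ {q : ℕ}, q.Prime → q % 4 = 3 → Even (padicValNat q (n * m)) := by
      intro q hq h4
      haveI : Fact q.Prime := ⟨hq⟩
      have hiff : Odd (n.factorization q) ↔ Odd (m.factorization q) := by
        constructor
        · intro ho
          exact ((prime_dvd_r3_iff hq m).mp (heq ▸ (prime_dvd_r3_iff hq n).mpr ⟨h4, ho⟩)).2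
        · intro ho
          exact ((prime_dvd_r3_iff hq n).mp (heq ▸ (prime_dvd_r3_iff hq m).mpr ⟨h4, ho⟩)).2
      rw [padicValNat.mul hn.ne' hm.ne', ← Nat.factorization_def n hq,
        ← Nat.factorization_def m hq, Nat.even_iff]
      rw [Nat.odd_iff, Nat.odd_iff] at hiff
      omega
    obtain ⟨x, y, hxy⟩ := Nat.eq_sq_add_sq_iff.mpr fun q hq' h4 => hpar (Nat.prime_of_mem_primeFactors hq') h4
    have hxyQ : (x : ℚ) ^ 2 + (y : ℚ) ^ 2 = (n : ℚ) * m := by exact_mod_cast hxy.symm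
    refine ⟨!![(x : ℚ)/n, -(y : ℚ)/n; (y : ℚ)/n, (x : ℚ)/n], ?_, ?_⟩
    · rw [Matrix.isUnit_iff_isUnit_det, Matrix.det_fin_two_of, isUnit_iff_ne_zero]
      have : (x : ℚ)/n * ((x : ℚ)/n) - -(y : ℚ)/n * ((y : ℚ)/n) = ((x:ℚ)^2 + y^2) / n^2 := by
        ring
      rw [this, hxyQ]
      positivity
    · have hT : (!![(x : ℚ)/n, -(y : ℚ)/n; (y : ℚ)/n, (x : ℚ)/n])ᵀ =
          !![(x : ℚ)/n, (y : ℚ)/n; -(y : ℚ)/n, (x : ℚ)/n] := by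
        ext i j; fin_cases i <;> fin_cases j <;> rfl
      rw [hT]
      ext i j
      fin_cases i <;> fin_cases j <;>
        simp [Matrix.mul_apply, Fin.sum_univ_two, Matrix.one_apply,
          Matrix.transpose_apply] <;>
        field_simp <;>
        first
          | linear_combination hxyQ
          | linear_combination (n : ℚ) * hxyQ
          | linear_combination (m : ℚ) * hxyQ
          | linear_combination (n : ℚ) ^ 2 * hxyQ
          | ring
end

section
/- Let M be an n×n invertible symmetric rational matrix and for i ≠ j let M_{i,i}, M_{j,j}, M_{i,j} denote the first minors obtained by deleting the indicated row and column, and M_{[i,j]} the minor obtained by deleting rows and columns i and j. Then det(M)·det(M_{[i,j]}) = M_{i,i}·M_{j,j} − (M_{i,j})². -/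
open Matrix Function

section helpers
variable {R : Type*} [CommRing R] {N α β : Type*}
  [DecidableEq α] [Fintype α] [DecidableEq β] [Fintype β]

lemma det_submatrix_equiv_equiv (A : Matrix β β R) (σ τ : α ≃ β) :
    (A.submatrix σ τ).det = (Equiv.Perm.sign (τ.trans σ.symm) : ℤ) * A.det := by
  have h : A.submatrix σ τ = (A.submatrix σ σ).submatrix id (τ.trans σ.symm) := by
    ext x y; simp
  rw [h, det_permute', det_submatrix_equiv_self]

lemma equiv_of_range_eq {u : α → N} {v : β → N} (hu : Injective u) (hv : Injective v)
    (h : Set.range u = Set.range v) : ∃ e : α ≃ β, ∀ a, v (e a) = u a := by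
  refine ⟨(Equiv.ofInjective u hu).trans ((Equiv.setCongr h).trans (Equiv.ofInjective v hv).symm), fun a => ?_⟩
  simp [Equiv.apply_ofInjective_symm hv]

lemma det_submatrix_range_eq (M : Matrix N N R) {u : α → N} {v : β → N}
    (hu : Injective u) (hv : Injective v) (h : Set.range u = Set.range v) :
    (M.submatrix u u).det = (M.submatrix v v).det := by
  obtain ⟨e, he⟩ := equiv_of_range_eq hu hv h
  have : M.submatrix u u = (M.submatrix v v).submatrix e e := by
    ext x y; simp [he]
  rw [this, det_submatrix_equiv_self]

lemma sq_det_submatrix_range_eq (M : Matrix N N R) {u w : α → N} {v x : β → N}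
    (hu : Injective u) (hw : Injective w) (hv : Injective v) (hx : Injective x)
    (h1 : Set.range u = Set.range v) (h2 : Set.range w = Set.range x) :
    (M.submatrix u w).det ^ 2 = (M.submatrix v x).det ^ 2 := by
  obtain ⟨e, he⟩ := equiv_of_range_eq hu hv h1
  obtain ⟨f, hf⟩ := equiv_of_range_eq hw hx h2
  have : M.submatrix u w = (M.submatrix v x).submatrix e f := by
    ext a b; simp [he, hf]
  rw [this, det_submatrix_equiv_equiv]
  rcases Int.units_eq_one_or (Equiv.Perm.sign (f.trans e.symm)) with h | h <;>
    rw [h] <;> push_cast <;> ring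
end helpers


section key
variable {K : Type*} [Field K] {n : ℕ}

lemma key_field (A : Matrix (Fin 2) (Fin 2) K) (B : Matrix (Fin 2) (Fin n) K)
    (C : Matrix (Fin n) (Fin 2) K) (D : Matrix (Fin n) (Fin n) K) [Invertible D] :
    (fromBlocks A B C D).det * D.det =
      (fromBlocks (of fun (_ : Fin 1) (_ : Fin 1) => A 1 1) (of fun _ k => B 1 k)
        (of fun k _ => C k 1) D).det *
      (fromBlocks (of fun (_ : Fin 1) (_ : Fin 1) => A 0 0) (of fun _ k => B 0 k)
        (of fun k _ => C k 0) D).det -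
      (fromBlocks (of fun (_ : Fin 1) (_ : Fin 1) => A 1 0) (of fun _ k => B 1 k)
        (of fun k _ => C k 0) D).det *
      (fromBlocks (of fun (_ : Fin 1) (_ : Fin 1) => A 0 1) (of fun _ k => B 0 k)
        (of fun k _ => C k 1) D).det := by
  have h : ∀ a b : Fin 2,
      (fromBlocks (of fun (_ : Fin 1) (_ : Fin 1) => A a b) (of fun _ k => B a k)
        (of fun k _ => C k b) D).det = D.det * (A - B * ⅟D * C) a b := by
    intro a b
    rw [det_fromBlocks₂₂, det_fin_one]
    simp [Matrix.mul_apply, Matrix.sub_apply]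
  rw [det_fromBlocks₂₂, h, h, h, h, det_fin_two]
  ring
end key

lemma key_rat {n : ℕ} (A : Matrix (Fin 2) (Fin 2) ℚ) (B : Matrix (Fin 2) (Fin n) ℚ)
    (C : Matrix (Fin n) (Fin 2) ℚ) (D : Matrix (Fin n) (Fin n) ℚ) :
    (fromBlocks A B C D).det * D.det =
      (fromBlocks (of fun (_ : Fin 1) (_ : Fin 1) => A 1 1) (of fun _ k => B 1 k)
        (of fun k _ => C k 1) D).det *
      (fromBlocks (of fun (_ : Fin 1) (_ : Fin 1) => A 0 0) (of fun _ k => B 0 k)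
        (of fun k _ => C k 0) D).det -
      (fromBlocks (of fun (_ : Fin 1) (_ : Fin 1) => A 1 0) (of fun _ k => B 1 k)
        (of fun k _ => C k 0) D).det *
      (fromBlocks (of fun (_ : Fin 1) (_ : Fin 1) => A 0 1) (of fun _ k => B 0 k)
        (of fun k _ => C k 1) D).det := by
  -- work over ℚ[X] with D replaced by D + X•1, then evaluate at 0
  set P := Polynomial ℚ
  let F := RatFunc ℚ
  let A₁ : Matrix (Fin 2) (Fin 2) P := A.map Polynomial.C
  let B₁ : Matrix (Fin 2) (Fin n) P := B.map Polynomial.C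
  let C₁ : Matrix (Fin n) (Fin 2) P := C.map Polynomial.C
  let D₁ : Matrix (Fin n) (Fin n) P := D.map Polynomial.C + (Polynomial.X : P) • 1
  have hD₁ : D₁.det ≠ 0 := by
    have : D₁ = charmatrix (-D) := by
      ext k l
      rcases eq_or_ne k l with h | h
      · subst h; simp [D₁, Matrix.add_apply, Matrix.smul_apply, Matrix.one_apply]; ring
      · simp [D₁, h, Matrix.add_apply, Matrix.smul_apply, Matrix.one_apply, charmatrix_apply_ne _ _ _ h]
    rw [this]
    exact ((-D).charpoly_monic).ne_zero
  have key₁ : (fromBlocks A₁ B₁ C₁ D₁).det * D₁.det =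
      (fromBlocks (of fun (_ : Fin 1) (_ : Fin 1) => A₁ 1 1) (of fun _ k => B₁ 1 k)
        (of fun k _ => C₁ k 1) D₁).det *
      (fromBlocks (of fun (_ : Fin 1) (_ : Fin 1) => A₁ 0 0) (of fun _ k => B₁ 0 k)
        (of fun k _ => C₁ k 0) D₁).det -
      (fromBlocks (of fun (_ : Fin 1) (_ : Fin 1) => A₁ 1 0) (of fun _ k => B₁ 1 k)
        (of fun k _ => C₁ k 0) D₁).det *
      (fromBlocks (of fun (_ : Fin 1) (_ : Fin 1) => A₁ 0 1) (of fun _ k => B₁ 0 k)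
        (of fun k _ => C₁ k 1) D₁).det := by
    have hinj : Injective (algebraMap P F) := IsFractionRing.injective P F
    have hdet' : ∀ {m : Type} [Fintype m] [DecidableEq m] (M : Matrix m m P),
        (algebraMap P F) M.det = (M.map (algebraMap P F)).det := fun M => by
      rw [RingHom.map_det, RingHom.mapMatrix_apply]
    have hdet : ((D₁.map (algebraMap P F)).det) ≠ 0 := by
      rw [← hdet']
      intro h
      exact hD₁ (hinj (by rw [h, map_zero]))
    have : Invertible (D₁.map (algebraMap P F)) :=
      Matrix.invertibleOfIsUnitDet _ (isUnit_iff_ne_zero.mpr hdet)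
    apply hinj
    have h := key_field (A₁.map (algebraMap P F)) (B₁.map (algebraMap P F))
      (C₁.map (algebraMap P F)) (D₁.map (algebraMap P F))
    rw [_root_.map_mul, _root_.map_sub, _root_.map_mul, _root_.map_mul,
      hdet', hdet', hdet', hdet', hdet', hdet', Matrix.fromBlocks_map,
      Matrix.fromBlocks_map, Matrix.fromBlocks_map, Matrix.fromBlocks_map,
      Matrix.fromBlocks_map]
    exact h
  -- evaluate at 0
  have ev := congrArg (Polynomial.evalRingHom (0 : ℚ)) key₁
  set g := Polynomial.evalRingHom (0 : ℚ) with hg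
  have hev : ∀ {m : Type} [Fintype m] [DecidableEq m] (M : Matrix m m P),
      g M.det = (M.map g).det := fun M => by
    rw [RingHom.map_det, RingHom.mapMatrix_apply]
  rw [_root_.map_mul, _root_.map_sub, _root_.map_mul, _root_.map_mul,
    hev, hev, hev, hev, hev, hev, Matrix.fromBlocks_map, Matrix.fromBlocks_map,
    Matrix.fromBlocks_map, Matrix.fromBlocks_map, Matrix.fromBlocks_map] at ev
  have hD : D₁.map g = D := by
    ext a b
    simp [D₁, hg, Matrix.add_apply, Matrix.smul_apply, Matrix.one_apply, Matrix.map_apply, apply_ite (Polynomial.eval (0:ℚ))]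
  have hA : A₁.map g = A := by ext a b; simp [A₁, hg]
  have hB : B₁.map g = B := by ext a b; simp [B₁, hg]
  have hC : C₁.map g = C := by ext a b; simp [C₁, hg]
  have sA : ∀ a b : Fin 2, ((of fun (_ : Fin 1) (_ : Fin 1) => A₁ a b).map g)
      = of fun (_ : Fin 1) (_ : Fin 1) => A a b := by
    intro a b; ext x y; simp [A₁, hg]
  have sB : ∀ a : Fin 2, ((of fun (_ : Fin 1) k => B₁ a k).map g)
      = of fun (_ : Fin 1) k => B a k := by
    intro a; ext x y; simp [B₁, hg]
  have sC : ∀ b : Fin 2, ((of fun k (_ : Fin 1) => C₁ k b).map g)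
      = of fun k (_ : Fin 1) => C k b := by
    intro b; ext x y; simp [C₁, hg]
  rw [hA, hB, hC, hD, sA, sA, sA, sA, sB 0, sB 1, sC 0, sC 1] at ev
  exact ev

lemma main_aux {n : ℕ} (M : Matrix (Fin (n + 2)) (Fin (n + 2)) ℚ) (hM : M.IsSymm)
    (i j : Fin (n + 2)) (hij : i ≠ j)
    (q : Fin n → Fin (n + 2)) (ui uj : Fin (n + 1) → Fin (n + 2))
    (hq : Injective q) (hrq : Set.range q = (({i, j}ᶜ : Finset (Fin (n + 2))) : Set (Fin (n + 2))))
    (hui : Injective ui) (hrui : Set.range ui = (({i}ᶜ : Finset (Fin (n + 2))) : Set (Fin (n + 2))))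
    (huj : Injective uj) (hruj : Set.range uj = (({j}ᶜ : Finset (Fin (n + 2))) : Set (Fin (n + 2)))) :
    M.det * (M.submatrix q q).det =
      (M.submatrix ui ui).det * (M.submatrix uj uj).det - (M.submatrix ui uj).det ^ 2 := by
  have hqc : ∀ k, q k ∈ ({i, j}ᶜ : Finset (Fin (n + 2))) := by
    intro k
    have : q k ∈ Set.range q := ⟨k, rfl⟩
    rw [hrq] at this
    exact_mod_cast this
  have hqi : ∀ k, q k ≠ i := fun k h => by
    have := hqc k; simp [h] at this
  have hqj : ∀ k, q k ≠ j := fun k h => by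
    have := hqc k; simp [h] at this
  have hp : Injective (![i, j] : Fin 2 → Fin (n + 2)) := by
    intro a b h
    fin_cases a <;> fin_cases b <;> simp_all <;> exact absurd h.symm hij
  have hb : Bijective (Sum.elim (![i, j] : Fin 2 → Fin (n + 2)) q) := by
    rw [Fintype.bijective_iff_injective_and_card]
    constructor
    · intro x y h
      rcases x with x | x <;> rcases y with y | y
      · exact congrArg _ (hp h)
      · exfalso; fin_cases x <;> simp at h
        · exact hqi y h.symm
        · exact hqj y h.symm
      · exfalso; fin_cases y <;> simp at h
        · exact hqi x h
        · exact hqj x h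
      · exact congrArg _ (hq h)
    · simp; omega
  -- the sub-index maps
  have hvj : Injective (Sum.elim (fun _ : Fin 1 => j) q) := by
    intro x y h
    rcases x with x | x <;> rcases y with y | y <;> simp at h
    · exact congrArg _ (Subsingleton.elim x y)
    · exact absurd h.symm (hqj y)
    · exact absurd h (hqj x)
    · exact congrArg _ (hq h)
  have hvi : Injective (Sum.elim (fun _ : Fin 1 => i) q) := by
    intro x y h
    rcases x with x | x <;> rcases y with y | y <;> simp at h
    · exact congrArg _ (Subsingleton.elim x y)
    · exact absurd h.symm (hqi y)
    · exact absurd h (hqi x)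
    · exact congrArg _ (hq h)
  have hrvj : Set.range (Sum.elim (fun _ : Fin 1 => j) q) = Set.range ui := by
    rw [Set.Sum.elim_range, hrq, hrui]
    ext x
    rcases eq_or_ne x i with rfl | hxi <;> rcases eq_or_ne x j with rfl | hxj <;>
      simp_all [Set.range_const]
  have hrvi : Set.range (Sum.elim (fun _ : Fin 1 => i) q) = Set.range uj := by
    rw [Set.Sum.elim_range, hrq, hruj]
    ext x
    rcases eq_or_ne x i with rfl | hxi <;> rcases eq_or_ne x j with rfl | hxj <;>
      simp_all [Set.range_const]
  have key := key_rat (M.submatrix ![i, j] ![i, j]) (M.submatrix ![i, j] q)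
    (M.submatrix q ![i, j]) (M.submatrix q q)
  have h0 : fromBlocks (M.submatrix ![i, j] ![i, j]) (M.submatrix ![i, j] q)
      (M.submatrix q ![i, j]) (M.submatrix q q)
      = M.submatrix (Sum.elim ![i, j] q) (Sum.elim ![i, j] q) := by
    ext x y; rcases x with x | x <;> rcases y with y | y <;> rfl
  have hdetM : (M.submatrix (Sum.elim ![i, j] q) (Sum.elim ![i, j] q)).det = M.det :=
    det_submatrix_equiv_self (Equiv.ofBijective _ hb) M
  have h11 : fromBlocks (of fun (_ : Fin 1) (_ : Fin 1) => (M.submatrix ![i, j] ![i, j]) 1 1)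
      (of fun _ k => (M.submatrix ![i, j] q) 1 k) (of fun k _ => (M.submatrix q ![i, j]) k 1)
      (M.submatrix q q)
      = M.submatrix (Sum.elim (fun _ : Fin 1 => j) q) (Sum.elim (fun _ : Fin 1 => j) q) := by
    ext x y; rcases x with x | x <;> rcases y with y | y <;> simp
  have h00 : fromBlocks (of fun (_ : Fin 1) (_ : Fin 1) => (M.submatrix ![i, j] ![i, j]) 0 0)
      (of fun _ k => (M.submatrix ![i, j] q) 0 k) (of fun k _ => (M.submatrix q ![i, j]) k 0)
      (M.submatrix q q)
      = M.submatrix (Sum.elim (fun _ : Fin 1 => i) q) (Sum.elim (fun _ : Fin 1 => i) q) := by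
    ext x y; rcases x with x | x <;> rcases y with y | y <;> simp
  have h10 : fromBlocks (of fun (_ : Fin 1) (_ : Fin 1) => (M.submatrix ![i, j] ![i, j]) 1 0)
      (of fun _ k => (M.submatrix ![i, j] q) 1 k) (of fun k _ => (M.submatrix q ![i, j]) k 0)
      (M.submatrix q q)
      = M.submatrix (Sum.elim (fun _ : Fin 1 => j) q) (Sum.elim (fun _ : Fin 1 => i) q) := by
    ext x y; rcases x with x | x <;> rcases y with y | y <;> simp
  have h01 : fromBlocks (of fun (_ : Fin 1) (_ : Fin 1) => (M.submatrix ![i, j] ![i, j]) 0 1)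
      (of fun _ k => (M.submatrix ![i, j] q) 0 k) (of fun k _ => (M.submatrix q ![i, j]) k 1)
      (M.submatrix q q)
      = M.submatrix (Sum.elim (fun _ : Fin 1 => i) q) (Sum.elim (fun _ : Fin 1 => j) q) := by
    ext x y; rcases x with x | x <;> rcases y with y | y <;> simp
  rw [h0, h11, h00, h10, h01, hdetM] at key
  have hsymm : (M.submatrix (Sum.elim (fun _ : Fin 1 => i) q) (Sum.elim (fun _ : Fin 1 => j) q)).det
      = (M.submatrix (Sum.elim (fun _ : Fin 1 => j) q) (Sum.elim (fun _ : Fin 1 => i) q)).det := by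
    rw [show M.submatrix (Sum.elim (fun _ : Fin 1 => i) q) (Sum.elim (fun _ : Fin 1 => j) q)
        = (M.submatrix (Sum.elim (fun _ : Fin 1 => j) q) (Sum.elim (fun _ : Fin 1 => i) q))ᵀ from by
      ext x y; exact (hM.apply _ _).symm, det_transpose]
  rw [hsymm, ← sq] at key
  rw [key,
    det_submatrix_range_eq M hvj hui hrvj,
    det_submatrix_range_eq M hvi huj hrvi,
    sq_det_submatrix_range_eq M hvj hvi hui huj hrvj hrvi]


lemma range_orderIsoOfFin {N m : ℕ} (s : Finset (Fin N)) (h : s.card = m) :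
    Set.range (fun k => ((s.orderIsoOfFin h k : Fin N))) = (s : Set (Fin N)) := by
  ext x
  constructor
  · rintro ⟨k, rfl⟩
    exact (s.orderIsoOfFin h k).2
  · intro hx
    obtain ⟨k, hk⟩ := (s.orderIsoOfFin h).surjective ⟨x, hx⟩
    exact ⟨k, by simp [hk]⟩

lemma inj_orderIsoOfFin {N m : ℕ} (s : Finset (Fin N)) (h : s.card = m) :
    Function.Injective (fun k => ((s.orderIsoOfFin h k : Fin N))) :=
  fun a b hab => (s.orderIsoOfFin h).injective (Subtype.ext hab)

/-- Desnanot–Jacobi identity for symmetric matrices: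
`det M * det M[i,j] = M_{i,i} * M_{j,j} - M_{i,j}^2`. -/
theorem desnanot_jacobi_symmetric (n : ℕ) (M : Matrix (Fin (n + 2)) (Fin (n + 2)) ℚ)
    (hM : M.IsSymm) (hinv : IsUnit M.det) (i j : Fin (n + 2)) (hij : i ≠ j)
    (hci : ({i}ᶜ : Finset (Fin (n + 2))).card = n + 1)
    (hcj : ({j}ᶜ : Finset (Fin (n + 2))).card = n + 1)
    (hcij : ({i, j}ᶜ : Finset (Fin (n + 2))).card = n) :
    M.det *
      (M.submatrix (fun k => ((({i, j}ᶜ : Finset (Fin (n + 2))).orderIsoOfFin hcij k : Fin (n + 2))))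
        (fun k => ((({i, j}ᶜ : Finset (Fin (n + 2))).orderIsoOfFin hcij k : Fin (n + 2))))).det =
    (M.submatrix (fun k => ((({i}ᶜ : Finset (Fin (n + 2))).orderIsoOfFin hci k : Fin (n + 2))))
        (fun k => ((({i}ᶜ : Finset (Fin (n + 2))).orderIsoOfFin hci k : Fin (n + 2))))).det *
    (M.submatrix (fun k => ((({j}ᶜ : Finset (Fin (n + 2))).orderIsoOfFin hcj k : Fin (n + 2))))
        (fun k => ((({j}ᶜ : Finset (Fin (n + 2))).orderIsoOfFin hcj k : Fin (n + 2))))).det -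
    ((M.submatrix (fun k => ((({i}ᶜ : Finset (Fin (n + 2))).orderIsoOfFin hci k : Fin (n + 2))))
        (fun k => ((({j}ᶜ : Finset (Fin (n + 2))).orderIsoOfFin hcj k : Fin (n + 2))))).det) ^ 2 :=
  main_aux M hM i j hij _ _ _
    (inj_orderIsoOfFin _ hcij) (range_orderIsoOfFin _ hcij)
    (inj_orderIsoOfFin _ hci) (range_orderIsoOfFin _ hci)
    (inj_orderIsoOfFin _ hcj) (range_orderIsoOfFin _ hcj)
end

section
/- Bruck–Ryser theorem: if there exists a projective plane of order n (equivalently, a {0,1} matrix M of size n²+n+1 with Mᵀ M = n·I + J), and n ≡ 1 or 2 mod 4, then n is a sum of two integer squares. -/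
open Matrix

open Finset in
lemma br_elim : ∀ (d : ℕ) (C : Fin d → Fin (d+1) → ℚ),
    ∃ v : Fin (d+1) → ℚ, v (Fin.last d) = 1 ∧
      ∀ j : Fin d, (v j.castSucc)^2 = (∑ k, C j k * v k)^2 := by
  intro d
  induction d with
  | zero => exact fun C => ⟨fun _ => 1, rfl, fun j => j.elim0⟩
  | succ d ih =>
    intro C
    set p : Fin (d+2) := (Fin.last d).castSucc with hp
    set c : ℚ := C (Fin.last d) p with hc
    set ε : ℚ := if c = 1 then -1 else 1 with hε
    have hε2 : ε ^ 2 = 1 := by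
      rcases ite_eq_or_eq (c = 1) (-1 : ℚ) 1 with h | h <;> rw [hε, h] <;> ring
    set s : ℚ := 1 - ε * c with hs
    have hs0 : s ≠ 0 := by
      rw [hs, hε]
      split_ifs with h
      · rw [h]; norm_num
      · intro hcon
        exact h (by linarith [hcon])
    set t : ℚ := ε / s with ht
    have hst : s * t = ε := by rw [ht]; field_simp
    obtain ⟨z, hz1, hz2⟩ := ih (fun j i =>
      C j.castSucc (p.succAbove i) + C j.castSucc p * t * C (Fin.last d) (p.succAbove i))
    set A : ℚ := ∑ i, C (Fin.last d) (p.succAbove i) * z i with hA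
    set v : Fin (d+2) → ℚ := p.insertNth (t * A) z with hv
    have hvp : v p = t * A := by rw [hv]; exact Fin.insertNth_apply_same (α := fun _ => ℚ) p _ z
    have hvs : ∀ i, v (p.succAbove i) = z i := by
      intro i; rw [hv]; exact Fin.insertNth_apply_succAbove (α := fun _ => ℚ) p _ z i
    refine ⟨v, ?_, ?_⟩
    · have h1 : p.succAbove (Fin.last d) = Fin.last (d+1) := by
        rw [Fin.succAbove_of_le_castSucc _ _ (le_refl _), Fin.succ_last]
      rw [← h1, hvs, hz1]
    · have hsum : ∀ j : Fin (d+1), (∑ k, C j k * v k)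
          = C j p * (t * A) + ∑ i, C j (p.succAbove i) * z i := by
        intro j
        rw [Fin.sum_univ_succAbove (fun k => C j k * v k) p, hvp]
        congr 1
        exact Finset.sum_congr rfl fun i _ => by rw [hvs]
      intro j
      induction j using Fin.lastCases with
      | last =>
        rw [← hp, hvp, hsum, ← hc, ← hA]
        have h2 : ε * A = s * t * A := by rw [hst]
        have h3 : s = 1 - ε * c := hs
        have key : t * A = ε * (c * (t * A) + A) := by
          linear_combination (-1 : ℚ) * h2 - (t * A) * h3
        linear_combination (t * A + ε * (c * (t * A) + A)) * key
          + (c * (t * A) + A) ^ 2 * hε2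
      | cast j' =>
        have hlt : (j'.castSucc).castSucc < p := by
          rw [hp, Fin.castSucc_lt_castSucc_iff]
          exact Fin.castSucc_lt_last j'
        have h4 : p.succAbove j'.castSucc = (j'.castSucc).castSucc :=
          Fin.succAbove_of_castSucc_lt _ _ hlt
        have hdist : ∀ (a b : Fin (d+1) → ℚ) (q : ℚ),
            ∑ k, (a k + q * b k) * z k = q * (∑ k, b k * z k) + ∑ k, a k * z k := by
          intro a b q
          rw [Finset.mul_sum, ← Finset.sum_add_distrib]
          exact Finset.sum_congr rfl fun i _ => by ring
        rw [← h4, hvs, hsum, hz2 j', hdist, ← hA]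
        ring

lemma br_quat (a b c e : ℚ) :
    ∃ T : Matrix (Fin 4) (Fin 4) ℚ, T * Tᵀ = (a^2+b^2+c^2+e^2) • 1 := by
  refine ⟨!![a,b,c,e; -b,a,-e,c; -c,e,a,-b; -e,-c,b,a], ?_⟩
  ext i j
  fin_cases i <;> fin_cases j <;>
    simp [Matrix.mul_apply, Fin.sum_univ_four, Matrix.one_apply, Matrix.transpose_apply,
      Matrix.vecHead, Matrix.vecTail, Function.comp] <;> ring

lemma br_B (n : ℚ) (a b c e : ℚ) (hn : n = a^2+b^2+c^2+e^2) (m N : ℕ) (hN : N = 4 * m) :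
    ∃ B : Matrix (Fin N) (Fin N) ℚ, B * Bᵀ = n • 1 := by
  obtain ⟨T, hT⟩ := br_quat a b c e
  let E : Fin N ≃ Fin 4 × Fin m :=
    (finCongr (by rw [hN, Nat.mul_comm])).trans finProdFinEquiv.symm
  refine ⟨(Matrix.blockDiagonal fun _ : Fin m => T).submatrix E E, ?_⟩
  rw [Matrix.transpose_submatrix, Matrix.submatrix_mul_equiv,
    Matrix.blockDiagonal_transpose, ← Matrix.blockDiagonal_mul]
  simp only [hT, hn]
  have hbd : (Matrix.blockDiagonal fun _ : Fin m => (a^2+b^2+c^2+e^2) • (1 : Matrix (Fin 4) (Fin 4) ℚ))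
      = (a^2+b^2+c^2+e^2) • 1 := by
    ext ⟨i, k⟩ ⟨j, l⟩
    by_cases hkl : k = l <;> by_cases hij : i = j <;>
      simp [Matrix.blockDiagonal_apply, Matrix.one_apply, Prod.ext_iff, hkl, hij]
  rw [hbd]
  ext i j
  by_cases h : i = j <;>
    simp [Matrix.submatrix_apply, Matrix.one_apply, h, E.injective.eq_iff]

lemma br_core (n : ℕ) (hn : 0 < n) (d m : ℕ) (hd4 : d + 1 = 4 * m)
    (M : Matrix (Fin d) (Fin d) ℚ)
    (hM : Mᵀ * M = (n : ℚ) • 1 + Matrix.of fun _ _ => (1 : ℚ)) :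
    ∃ l w : ℚ, (n : ℚ) * l ^ 2 = 1 + w ^ 2 := by
  have hn0 : (n : ℚ) ≠ 0 := Nat.cast_ne_zero.mpr hn.ne'
  obtain ⟨a, b, c, e, habce⟩ := Nat.sum_four_squares n
  obtain ⟨B, hB⟩ := br_B (n : ℚ) a b c e (by exact_mod_cast habce.symm) m (d+1) hd4
  obtain ⟨v, hv1, hv2⟩ := br_elim d
    (fun j k => (n : ℚ)⁻¹ * ∑ i : Fin d, M j i * B k i.castSucc)
  set Y : Fin (d+1) → ℚ := fun k => (n : ℚ)⁻¹ * ∑ k', B k' k * v k' with hY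
  set u : Fin d → ℚ := fun i => Y i.castSucc with hu
  -- entrywise consequence of hM
  have hMe : ∀ i i' : Fin d, ∑ k, M k i * M k i' = (if i = i' then (n:ℚ) else 0) + 1 := by
    intro i i'
    have h0 : (Mᵀ * M) i i' = ((n:ℚ) • 1 + Matrix.of fun _ _ => (1:ℚ)) i i' := by rw [hM]
    simp only [Matrix.mul_apply, Matrix.transpose_apply, Matrix.add_apply,
      Matrix.smul_apply, Matrix.one_apply, Matrix.of_apply, smul_eq_mul] at h0
    rw [h0]
    split_ifs <;> ring
  -- entrywise consequence of hB
  have hBe : ∀ k k' : Fin (d+1), ∑ i, B k i * B k' i = if k = k' then (n:ℚ) else 0 := by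
    intro k k'
    have h0 : (B * Bᵀ) k k' = ((n:ℚ) • (1 : Matrix (Fin (d+1)) (Fin (d+1)) ℚ)) k k' := by
      rw [hB]
    simp only [Matrix.mul_apply, Matrix.transpose_apply, Matrix.smul_apply,
      Matrix.one_apply, smul_eq_mul] at h0
    rw [h0]
    split_ifs <;> ring
  -- (K1) the elimination forms evaluated at v are M *ᵥ u
  have K1 : ∀ j : Fin d,
      (∑ k, ((n : ℚ)⁻¹ * ∑ i : Fin d, M j i * B k i.castSucc) * v k) = ∑ i, M j i * u i := by
    intro j
    calc ∑ k, ((n : ℚ)⁻¹ * ∑ i : Fin d, M j i * B k i.castSucc) * v k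
        = ∑ k, ∑ i, M j i * ((n:ℚ)⁻¹ * (B k i.castSucc * v k)) := by
          refine Finset.sum_congr rfl fun k _ => ?_
          rw [Finset.mul_sum, Finset.sum_mul]
          exact Finset.sum_congr rfl fun i _ => by ring
      _ = ∑ i, ∑ k, M j i * ((n:ℚ)⁻¹ * (B k i.castSucc * v k)) := Finset.sum_comm
      _ = ∑ i, M j i * u i := by
          refine Finset.sum_congr rfl fun i _ => ?_
          rw [← Finset.mul_sum, ← Finset.mul_sum, hu, hY]
  -- (K2) incidence identity
  have K2 : ∑ j, (∑ i, M j i * u i) ^ 2 = (n:ℚ) * (∑ i, u i ^ 2) + (∑ i, u i) ^ 2 := by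
    calc ∑ j, (∑ i, M j i * u i) ^ 2
        = ∑ j, ∑ i, ∑ i', (M j i * M j i') * (u i * u i') := by
          refine Finset.sum_congr rfl fun j _ => ?_
          rw [sq, Finset.sum_mul_sum]
          exact Finset.sum_congr rfl fun i _ => Finset.sum_congr rfl fun i' _ => by ring
      _ = ∑ i, ∑ i', (∑ j, M j i * M j i') * (u i * u i') := by
          rw [Finset.sum_comm]
          refine Finset.sum_congr rfl fun i _ => ?_
          rw [Finset.sum_comm]
          exact Finset.sum_congr rfl fun i' _ => by rw [Finset.sum_mul]
      _ = ∑ i, ∑ i', ((if i = i' then (n:ℚ) else 0) * (u i * u i') + u i * u i') := by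
          refine Finset.sum_congr rfl fun i _ => Finset.sum_congr rfl fun i' _ => ?_
          rw [hMe]; ring
      _ = (∑ i, ∑ i', (if i = i' then (n:ℚ) else 0) * (u i * u i'))
            + ∑ i, ∑ i', u i * u i' := by
          rw [← Finset.sum_add_distrib]
          refine Finset.sum_congr rfl fun i _ => ?_
          rw [← Finset.sum_add_distrib]
      _ = (n:ℚ) * (∑ i, u i ^ 2) + (∑ i, u i) ^ 2 := by
          congr 1
          · rw [Finset.mul_sum]
            refine Finset.sum_congr rfl fun i _ => ?_
            simp only [ite_mul, zero_mul, Finset.sum_ite_eq, Finset.mem_univ, if_true]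
            ring
          · rw [sq, Finset.sum_mul_sum]
  -- (K3) norm relation
  have K3 : (n : ℚ) * (∑ k, Y k ^ 2) = ∑ k, v k ^ 2 := by
    calc (n:ℚ) * ∑ k, Y k ^ 2
        = ∑ k, (n:ℚ) * (Y k * Y k) := by
          rw [Finset.mul_sum]; exact Finset.sum_congr rfl fun k _ => by rw [sq]
      _ = ∑ k, (n:ℚ)⁻¹ * ((∑ k', B k' k * v k') * (∑ k', B k' k * v k')) := by
          refine Finset.sum_congr rfl fun k _ => ?_
          rw [hY]; field_simp
      _ = ∑ k, (n:ℚ)⁻¹ * ∑ k', ∑ k'', (B k' k * B k'' k) * (v k' * v k'') := by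
          refine Finset.sum_congr rfl fun k _ => ?_
          rw [Finset.sum_mul_sum]
          congr 1
          exact Finset.sum_congr rfl fun k' _ => Finset.sum_congr rfl fun k'' _ => by ring
      _ = (n:ℚ)⁻¹ * ∑ k', ∑ k'', (∑ k, B k' k * B k'' k) * (v k' * v k'') := by
          rw [← Finset.mul_sum]
          congr 1
          rw [Finset.sum_comm]
          refine Finset.sum_congr rfl fun k' _ => ?_
          rw [Finset.sum_comm]
          exact Finset.sum_congr rfl fun k'' _ => by rw [Finset.sum_mul]
      _ = (n:ℚ)⁻¹ * ∑ k', (n:ℚ) * (v k' * v k') := by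
          congr 1
          refine Finset.sum_congr rfl fun k' _ => ?_
          calc ∑ k'', (∑ k, B k' k * B k'' k) * (v k' * v k'')
              = ∑ k'', (if k' = k'' then (n:ℚ) else 0) * (v k' * v k'') := by
                exact Finset.sum_congr rfl fun k'' _ => by rw [hBe]
            _ = (n:ℚ) * (v k' * v k') := by
                simp only [ite_mul, zero_mul, Finset.sum_ite_eq, Finset.mem_univ, if_true]
      _ = ∑ k, v k ^ 2 := by
          rw [Finset.mul_sum]
          refine Finset.sum_congr rfl fun k _ => ?_
          field_simp
  refine ⟨Y (Fin.last d), ∑ i, u i, ?_⟩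
  have S1 : ∑ k, Y k ^ 2 = ∑ i, u i ^ 2 + Y (Fin.last d) ^ 2 := by
    rw [Fin.sum_univ_castSucc]
  have S2 : ∑ k, v k ^ 2 = ∑ j, (∑ i, M j i * u i) ^ 2 + 1 := by
    rw [Fin.sum_univ_castSucc, hv1, one_pow]
    congr 1
    refine Finset.sum_congr rfl fun j _ => ?_
    rw [hv2 j, K1 j]
  have hfin := K3
  rw [S1, S2, K2] at hfin
  nlinarith [hfin]

lemma br_two_squares (n : ℕ) (hn : 0 < n) (l w : ℚ)
    (h : (n : ℚ) * l ^ 2 = 1 + w ^ 2) : ∃ a b : ℤ, (n : ℤ) = a ^ 2 + b ^ 2 := by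
  have hl : (l.num : ℚ) = l * l.den := (Rat.mul_den_eq_num l).symm
  have hw : (w.num : ℚ) = w * w.den := (Rat.mul_den_eq_num w).symm
  set Q : ℤ := l.num * w.den with hQ
  set R : ℤ := (l.den : ℤ) * w.den with hR
  set S : ℤ := w.num * l.den with hS
  have hZ : (n : ℤ) * Q ^ 2 = R ^ 2 + S ^ 2 := by
    have : (n : ℚ) * (Q : ℚ) ^ 2 = (R : ℚ) ^ 2 + (S : ℚ) ^ 2 := by
      push_cast [hQ, hR, hS]
      rw [hl, hw]
      linear_combination ((l.den : ℚ) * w.den) ^ 2 * h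
    exact_mod_cast this
  have hR0 : R ≠ 0 := by
    simp only [hR]
    positivity
  have hQ0 : Q ≠ 0 := by
    intro h0
    rw [h0] at hZ
    simp at hZ
    have : R = 0 := by nlinarith [sq_nonneg R, sq_nonneg S]
    exact hR0 this
  have hNat : n * Q.natAbs ^ 2 = R.natAbs ^ 2 + S.natAbs ^ 2 := by
    have h1 : ((n * Q.natAbs ^ 2 : ℕ) : ℤ) = ((R.natAbs ^ 2 + S.natAbs ^ 2 : ℕ) : ℤ) := by
      push_cast [Int.natAbs_sq]
      rw [sq_abs, sq_abs, sq_abs]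
      exact hZ
    exact_mod_cast h1
  have hQn : Q.natAbs ≠ 0 := Int.natAbs_ne_zero.mpr hQ0
  have hpar : ∀ q : ℕ, q.Prime → q % 4 = 3 → Even (padicValNat q n) := by
    intro p hp hp3
    haveI : Fact p.Prime := ⟨hp⟩
    have hsum : ∃ x y : ℕ, n * Q.natAbs ^ 2 = x ^ 2 + y ^ 2 := ⟨_, _, hNat⟩
    have heven : Even (padicValNat p (n * Q.natAbs ^ 2)) := by
      by_cases hd : p ∣ n * Q.natAbs ^ 2
      · exact Nat.eq_sq_add_sq_iff.mp hsum p
          (Nat.mem_primeFactors.mpr ⟨hp, hd, Nat.mul_ne_zero hn.ne' (pow_ne_zero _ hQn)⟩) hp3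
      · rw [padicValNat.eq_zero_of_not_dvd hd]; exact Even.zero
    rw [padicValNat.mul hn.ne' (pow_ne_zero _ hQn), padicValNat.pow Q.natAbs 2] at heven
    obtain ⟨t, ht⟩ := heven
    exact ⟨t - padicValNat p Q.natAbs, by omega⟩
  obtain ⟨x, y, hxy⟩ := Nat.eq_sq_add_sq_iff.mpr (fun q hq hq3 => hpar q (Nat.prime_of_mem_primeFactors hq) hq3)
  exact ⟨(x : ℤ), (y : ℤ), by exact_mod_cast congrArg (fun t : ℕ => (t : ℤ)) hxy⟩

theorem bruck_ryser (n : ℕ) (hn : 0 < n) (hmod : n % 4 = 1 ∨ n % 4 = 2)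
    (M : Matrix (Fin (n ^ 2 + n + 1)) (Fin (n ^ 2 + n + 1)) ℤ)
    (h01 : ∀ i j, M i j = 0 ∨ M i j = 1)
    (hM : Mᵀ * M = (n : ℤ) • 1 + Matrix.of fun _ _ => (1 : ℤ)) :
    ∃ a b : ℤ, (n : ℤ) = a ^ 2 + b ^ 2 := by
  have hsq : n ^ 2 % 4 = (n % 4) ^ 2 % 4 := Nat.pow_mod n 2 4
  have hm : ∃ m, (n ^ 2 + n + 1) + 1 = 4 * m := by
    rcases hmod with h | h <;> rw [h] at hsq <;> norm_num at hsq <;>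
      exact ⟨(n ^ 2 + n + 2) / 4, by omega⟩
  obtain ⟨m, hm⟩ := hm
  set M' : Matrix (Fin (n ^ 2 + n + 1)) (Fin (n ^ 2 + n + 1)) ℚ :=
    M.map (fun z => (z : ℚ)) with hM'def
  have hM' : M'ᵀ * M' = (n : ℚ) • 1 + Matrix.of fun _ _ => (1 : ℚ) := by
    ext i j
    have h0 : ((Mᵀ * M) i j : ℤ) = (((n : ℤ) • 1 + Matrix.of fun _ _ => (1:ℤ)) i j) := by
      rw [hM]
    have h1 : (M'ᵀ * M') i j = (((Mᵀ * M) i j : ℤ) : ℚ) := by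
      simp only [Matrix.mul_apply, hM'def, Matrix.transpose_apply, Matrix.map_apply]
      push_cast
      rfl
    rw [h1, h0]
    simp only [Matrix.add_apply, Matrix.smul_apply, Matrix.one_apply, Matrix.of_apply,
      smul_eq_mul]
    split_ifs <;> push_cast <;> ring
  obtain ⟨l, w, hlw⟩ := br_core n hn (n ^ 2 + n + 1) m hm M' hM'
  exact br_two_squares n hn l w hlw
end

section
/- If a symmetric 2-(v,k,λ) design exists with v even and k > λ, then k − λ is a perfect square. -/
open Matrix

private lemma det_smul_one_add_smul_J (n : ℕ) (hn : n ≠ 0) (a b : ℚ) (ha : a ≠ 0) :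
    det (a • (1 : Matrix (Fin n) (Fin n) ℚ) + b • Matrix.of fun _ _ => (1 : ℚ))
      = a ^ (n - 1) * (a + n * b) := by
  have key : a • (1 : Matrix (Fin n) (Fin n) ℚ) + b • (Matrix.of fun _ _ => (1 : ℚ))
      = a • ((1 : Matrix (Fin n) (Fin n) ℚ) +
          (replicateCol Unit (fun _ => b / a) : Matrix (Fin n) Unit ℚ) *
          (replicateRow Unit (fun _ => (1 : ℚ)) : Matrix Unit (Fin n) ℚ)) := by
    ext i j
    simp only [Matrix.add_apply, Matrix.smul_apply, Matrix.of_apply, Matrix.one_apply,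
      Matrix.mul_apply, Matrix.replicateCol_apply, Matrix.replicateRow_apply, Finset.univ_unique,
      Finset.sum_singleton, smul_eq_mul, mul_ite, mul_one, mul_zero]
    split_ifs <;> field_simp <;> ring
  rw [key, det_smul, det_one_add_replicateCol_mul_replicateRow]
  simp only [dotProduct, Fintype.card_fin]
  rw [Finset.sum_const, Finset.card_univ, Fintype.card_fin]
  have hpow : a ^ n = a ^ (n - 1) * a := by
    conv_lhs => rw [← Nat.sub_add_cancel (Nat.one_le_iff_ne_zero.mpr hn)]
    ring
  rw [hpow]
  field_simp
  have hab : a * (b / a) = b := by field_simp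
  rw [nsmul_eq_mul]
  linear_combination (n : ℚ) * hab

theorem symmetric_design_v_even_perfect_square (v k l : ℕ) (hv : Even v)
    (hkl : l < k) (hpar : k * (k - 1) = (v - 1) * l)
    (D : Matrix (Fin v) (Fin v) ℤ)
    (h01 : ∀ i j, D i j = 0 ∨ D i j = 1)
    (hD : Dᵀ * D = ((k : ℤ) - (l : ℤ)) • 1 + (l : ℤ) • Matrix.of fun _ _ => (1 : ℤ)) :
    ∃ m : ℕ, k - l = m ^ 2 := by
  rcases Nat.eq_zero_or_pos v with hv0 | hvpos
  · -- v = 0 : then k*(k-1)=0, so k=1, l=0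
    subst hv0
    simp at hpar
    have hk1 : k = 1 := by
      rcases hpar with h | h
      · omega
      · omega
    exact ⟨1, by omega⟩
  have hv2 : 2 ≤ v := by
    rcases hv with ⟨t, ht⟩; omega
  -- determinant computation
  set d : ℤ := det D with hd
  have hdet : d ^ 2 = ((k : ℤ) - l) ^ (v - 1) * (k : ℤ) ^ 2 := by
    have h1 : d * d = det (Dᵀ * D) := by
      rw [det_mul, det_transpose]
    rw [hD] at h1
    -- cast to ℚ
    have h2 : ((d : ℚ)) * d = det ((((k : ℤ) - (l : ℤ)) • (1 : Matrix (Fin v) (Fin v) ℤ)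
        + (l : ℤ) • Matrix.of fun _ _ => (1 : ℤ)).map (Int.cast : ℤ → ℚ)) := by
      have h4 := RingHom.map_det (Int.castRingHom ℚ) (Dᵀ * D)
      rw [hD] at h4
      simp only [RingHom.mapMatrix_apply, Int.coe_castRingHom, eq_intCast] at h4
      rw [← h4, ← h1]
      push_cast
      ring
    have h3 : (((k : ℤ) - (l : ℤ)) • (1 : Matrix (Fin v) (Fin v) ℤ)
        + (l : ℤ) • Matrix.of fun _ _ => (1 : ℤ)).map (Int.cast : ℤ → ℚ)
        = ((k : ℚ) - l) • (1 : Matrix (Fin v) (Fin v) ℚ)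
          + (l : ℚ) • Matrix.of fun _ _ => (1 : ℚ) := by
      ext i j
      simp only [Matrix.map_apply, Matrix.add_apply, Matrix.smul_apply, Matrix.of_apply,
        Matrix.one_apply, smul_eq_mul, mul_ite, mul_one, mul_zero]
      split_ifs <;> push_cast <;> ring
    have ha : ((k : ℚ) - l) ≠ 0 := by
      have : (l : ℚ) < k := by exact_mod_cast hkl
      linarith
    rw [h3, det_smul_one_add_smul_J v (by omega) _ _ ha] at h2
    -- a + v*l = k^2
    have hcast : (k : ℚ) * ((k : ℚ) - 1) = ((v : ℚ) - 1) * l := by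
      have : ((k * (k - 1) : ℕ) : ℚ) = (((v - 1) * l : ℕ) : ℚ) := by exact_mod_cast hpar
      push_cast [Nat.cast_sub (by omega : 1 ≤ k), Nat.cast_sub (by omega : 1 ≤ v)] at this
      linarith
    have hk2 : (k : ℚ) - l + v * l = (k : ℚ) ^ 2 := by nlinarith [hcast]
    rw [hk2] at h2
    have : ((d ^ 2 : ℤ) : ℚ) = ((((k : ℤ) - l) ^ (v - 1) * (k : ℤ) ^ 2 : ℤ) : ℚ) := by
      push_cast
      rw [← h2]
      ring
    exact_mod_cast this
  -- v - 1 = 2*t + 1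
  obtain ⟨t, ht⟩ : ∃ t, v - 1 = 2 * t + 1 := by
    rcases hv with ⟨s, hs⟩; exact ⟨s - 1, by omega⟩
  set a : ℤ := (k : ℤ) - l with hadef
  have ha0 : 0 < a := by
    have : (l : ℤ) < k := by exact_mod_cast hkl
    omega
  set b : ℤ := a ^ t * k with hb
  have hbne : b ≠ 0 := by
    have hl : (l : ℤ) < k := by exact_mod_cast hkl
    have hk0 : (0 : ℤ) < k := by omega
    positivity
  have hdb : d ^ 2 = a * b ^ 2 := by
    rw [hdet, ht, hb]; ring
  have hdvd : b ∣ d := by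
    rw [← Int.pow_dvd_pow_iff (two_ne_zero)]
    exact ⟨a, by linarith [hdb]⟩
  obtain ⟨e, he⟩ := hdvd
  have hae : a = e ^ 2 := by
    have : b ^ 2 * a = b ^ 2 * e ^ 2 := by rw [he] at hdb; ring_nf; ring_nf at hdb; linarith [hdb]
    exact mul_left_cancel₀ (pow_ne_zero 2 hbne) this
  refine ⟨e.natAbs, ?_⟩
  have : ((k - l : ℕ) : ℤ) = ((e.natAbs ^ 2 : ℕ) : ℤ) := by
    push_cast [Nat.cast_sub (le_of_lt hkl)]
    rw [← hadef, hae, sq_abs]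
  exact_mod_cast this
end

section
/- Bruck–Ryser–Chowla (Diophantine form): if a symmetric 2-(v,k,λ) design exists with v odd, then the equation z² = (k−λ)x² + (−1)^{(v−1)/2} λ y² has a nontrivial solution in integers. -/
open Matrix Finset

lemma brc_sum_sq {I J : Type*} [Fintype I] [Fintype J] [DecidableEq I]
    (A : Matrix J I ℚ) (c e : ℚ)
    (hA : ∀ i i', (∑ j, A j i * A j i') = c * (if i = i' then 1 else 0) + e)
    (u : I → ℚ) :
    ∑ j, (A.mulVec u j) ^ 2 = c * (∑ i, (u i) ^ 2) + e * (∑ i, u i) ^ 2 := by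
  have h1 : ∀ j, (A.mulVec u j)^2 = ∑ i, ∑ i', (A j i * A j i') * (u i * u i') := by
    intro j
    rw [sq, Matrix.mulVec, dotProduct, Finset.sum_mul_sum]
    apply Finset.sum_congr rfl; intro i _; apply Finset.sum_congr rfl; intro i' _; ring
  calc ∑ j, (A.mulVec u j)^2
      = ∑ i, ∑ i', (∑ j, A j i * A j i') * (u i * u i') := by
        simp_rw [h1]
        rw [Finset.sum_comm]
        apply Finset.sum_congr rfl; intro i _
        rw [Finset.sum_comm]
        apply Finset.sum_congr rfl; intro i' _
        rw [Finset.sum_mul]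
    _ = ∑ i, ∑ i', (c * (if i = i' then 1 else 0) + e) * (u i * u i') := by simp_rw [hA]
    _ = c * (∑ i, (u i) ^ 2) + e * (∑ i, u i) ^ 2 := by
        simp_rw [add_mul, Finset.sum_add_distrib]
        congr 1
        · rw [Finset.mul_sum]
          apply Finset.sum_congr rfl; intro i _
          rw [Finset.sum_eq_single i]
          · simp [sq]
          · intro i' _ hne; simp [Ne.symm hne]
          · intro h; exact absurd (Finset.mem_univ i) h
        · rw [sq, Finset.sum_mul_sum, Finset.mul_sum]
          apply Finset.sum_congr rfl; intro i _
          rw [Finset.mul_sum]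


lemma brc_elim : ∀ (m : ℕ) (f : Matrix (Fin m) (Fin (m+1)) ℚ),
    ∃ z : Fin (m+1) → ℚ, z (Fin.last m) = 1 ∧
      ∀ i : Fin m, (f.mulVec z i) ^ 2 = (z i.castSucc) ^ 2 := by
  intro m
  induction m with
  | zero => exact fun f => ⟨fun _ => 1, rfl, fun i => i.elim0⟩
  | succ m ih =>
    intro f
    set a : ℚ := f 0 0 with ha
    set ε : ℚ := if a = 1 then -1 else 1 with hε
    have hεa : ε - a ≠ 0 := by
      by_cases h : a = 1 <;> simp [hε, h, sub_eq_zero] <;> [skip; exact fun hh => h hh.symm] <;> norm_num [h]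
    have hε2 : ε ^ 2 = 1 := by by_cases h : a = 1 <;> simp [hε, h]
    set g : Fin (m+1) → ℚ := fun j => f 0 j.succ / (ε - a) with hg
    set f' : Matrix (Fin m) (Fin (m+1)) ℚ :=
      Matrix.of (fun i j => f i.succ j.succ + f i.succ 0 * g j) with hf'
    obtain ⟨z', hz1, hz2⟩ := ih f'
    set z0 : ℚ := ∑ j, g j * z' j with hz0
    refine ⟨Fin.cons z0 z', ?_, ?_⟩
    · rw [← Fin.succ_last, Fin.cons_succ]; exact hz1
    · have hmv : ∀ i : Fin (m+1), f.mulVec (Fin.cons z0 z') i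
          = f i 0 * z0 + ∑ j, f i j.succ * z' j := by
        intro i
        rw [Matrix.mulVec, dotProduct, Fin.sum_univ_succ]
        simp [Fin.cons_zero, Fin.cons_succ]
      intro i
      induction i using Fin.cases with
      | zero =>
        rw [hmv]
        have h2 : ∑ j, f 0 j.succ * z' j = (ε - a) * z0 := by
          rw [hz0, Finset.mul_sum]
          apply Finset.sum_congr rfl; intro j _
          rw [hg]; field_simp
        rw [h2, Fin.castSucc_zero, Fin.cons_zero, ← ha]
        have : a * z0 + (ε - a) * z0 = ε * z0 := by ring
        rw [this, mul_pow, hε2, one_mul]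
      | succ i =>
        rw [hmv]
        have h3 : f i.succ 0 * z0 + ∑ j, f i.succ j.succ * z' j
            = f'.mulVec z' i := by
          rw [Matrix.mulVec, dotProduct, hz0, Finset.mul_sum,
            ← Finset.sum_add_distrib]
          apply Finset.sum_congr rfl; intro j _
          simp [hf']; ring
        rw [h3, hz2 i, ← Fin.succ_castSucc, Fin.cons_succ]


def brc_qm (a b c d : ℚ) : Matrix (Fin 4) (Fin 4) ℚ :=
  !![a, b, c, d; -b, a, -d, c; -c, d, a, -b; -d, -c, b, a]

lemma brc_qm_spec (a b c d : ℚ) :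
    (brc_qm a b c d)ᵀ * (brc_qm a b c d) = (a^2+b^2+c^2+d^2) • 1 := by
  ext i j
  rw [Matrix.mul_apply]
  simp only [Matrix.transpose_apply]
  rw [Fin.sum_univ_four]
  fin_cases i <;> fin_cases j <;>
    simp [brc_qm, Matrix.one_apply] <;> ring

lemma brc_conj {α : Type*} [Fintype α] [DecidableEq α] {q : ℕ}
    (e : α ≃ Fin q) (E : Matrix α α ℚ) (r : ℚ)
    (h : Eᵀ * E = r • 1) :
    (E.submatrix e.symm e.symm)ᵀ * (E.submatrix e.symm e.symm) = r • 1 := by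
  rw [Matrix.transpose_submatrix, Matrix.submatrix_mul_equiv, h]
  ext i j
  simp [Matrix.submatrix_apply, Matrix.one_apply, Equiv.symm_apply_eq]

lemma brc_exists_E : ∀ (t : ℕ) (a b c d : ℚ),
    ∃ E : Matrix (Fin (4*t)) (Fin (4*t)) ℚ, Eᵀ * E = (a^2+b^2+c^2+d^2) • 1 := by
  intro t
  induction t with
  | zero =>
    intro a b c d
    exact ⟨0, by ext i; exact i.elim0⟩
  | succ t ih =>
    intro a b c d
    obtain ⟨E, hE⟩ := ih a b c d
    set F : Matrix (Fin 4 ⊕ Fin (4*t)) (Fin 4 ⊕ Fin (4*t)) ℚ :=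
      Matrix.fromBlocks (brc_qm a b c d) 0 0 E with hF
    have hFF : Fᵀ * F = (a^2+b^2+c^2+d^2) • 1 := by
      rw [hF, Matrix.fromBlocks_transpose, Matrix.fromBlocks_multiply]
      simp [brc_qm_spec a b c d, hE]
      ext (i|i) (j|j) <;> simp [Matrix.fromBlocks, Matrix.one_apply]
    have he : (4 : ℕ) + 4*t = 4*(t+1) := by ring
    exact ⟨F.submatrix (finSumFinEquiv.trans (finCongr he)).symm
        (finSumFinEquiv.trans (finCongr he)).symm,
      brc_conj _ F _ hFF⟩

lemma brc_exists_E' (N : ℕ) (hN : N % 4 = 0) (a b c d : ℚ) :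
    ∃ E : Matrix (Fin N) (Fin N) ℚ, Eᵀ * E = (a^2+b^2+c^2+d^2) • 1 := by
  obtain ⟨t, rfl⟩ : ∃ t, N = 4*t := ⟨N/4, by omega⟩
  exact brc_exists_E t a b c d


lemma brc_num_cast (q : ℚ) : (q.num : ℚ) = q * q.den := by
  have hd : (q.den : ℚ) ≠ 0 := by exact_mod_cast q.den_nz
  have h2 := Rat.num_div_den q
  rw [div_eq_iff hd] at h2
  exact h2

lemma brc_ratClear (A B : ℤ) (g s w : ℚ) (hne : ¬(g = 0 ∧ s = 0 ∧ w = 0))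
    (h : g ^ 2 = (A : ℚ) * s ^ 2 + (B : ℚ) * w ^ 2) :
    ∃ x y z : ℤ, (x, y, z) ≠ ((0:ℤ), (0:ℤ), (0:ℤ)) ∧
      z ^ 2 = A * x ^ 2 + B * y ^ 2 := by
  refine ⟨s.num * g.den * w.den, w.num * g.den * s.den, g.num * s.den * w.den, ?_, ?_⟩
  · intro hz
    rw [Prod.mk.injEq, Prod.mk.injEq] at hz
    obtain ⟨h1, h2, h3⟩ := hz
    apply hne
    have hg : g.num = 0 := by
      have := mul_ne_zero (Int.natCast_ne_zero.mpr s.den_nz) (Int.natCast_ne_zero.mpr w.den_nz)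
      rcases mul_eq_zero.mp (by rw [mul_assoc] at h3; exact h3) with h | h
      · exact h
      · exact absurd h this
    have hs : s.num = 0 := by
      have := mul_ne_zero (Int.natCast_ne_zero.mpr g.den_nz) (Int.natCast_ne_zero.mpr w.den_nz)
      rcases mul_eq_zero.mp (by rw [mul_assoc] at h1; exact h1) with h | h
      · exact h
      · exact absurd h this
    have hw : w.num = 0 := by
      have := mul_ne_zero (Int.natCast_ne_zero.mpr g.den_nz) (Int.natCast_ne_zero.mpr s.den_nz)
      rcases mul_eq_zero.mp (by rw [mul_assoc] at h2; exact h2) with h | h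
      · exact h
      · exact absurd h this
    exact ⟨Rat.num_eq_zero.mp hg, Rat.num_eq_zero.mp hs, Rat.num_eq_zero.mp hw⟩
  · have key : ((g.num * s.den * w.den : ℤ) : ℚ) ^ 2
        = (A:ℚ) * ((s.num * g.den * w.den : ℤ) : ℚ) ^ 2
          + (B:ℚ) * ((w.num * g.den * s.den : ℤ) : ℚ) ^ 2 := by
      push_cast
      rw [brc_num_cast g, brc_num_cast s, brc_num_cast w]
      ring_nf
      nlinarith [h, sq_nonneg ((g.den : ℚ) * s.den * w.den)]
    exact_mod_cast key


lemma brc_mul_inv {N : ℕ} (E : Matrix (Fin N) (Fin N) ℚ) (r : ℚ) (hr : r ≠ 0)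
    (h : Eᵀ * E = r • 1) : E * E⁻¹ = 1 := by
  have h1 : E.det * E.det = r ^ N := by
    have h2 := congrArg Matrix.det h
    rw [Matrix.det_mul, Matrix.det_transpose, Matrix.det_smul, Matrix.det_one, mul_one] at h2
    simpa using h2
  apply Matrix.mul_nonsing_inv
  apply isUnit_iff_ne_zero.mpr
  intro h0
  exact pow_ne_zero N hr (by rw [← h1, h0, mul_zero])

theorem bruck_ryser_chowla (v k l : ℕ) (hv : Odd v)
    (hpar : k * (k - 1) = (v - 1) * l)
    (D : Matrix (Fin v) (Fin v) ℤ)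
    (h01 : ∀ i j, D i j = 0 ∨ D i j = 1)
    (hD : Dᵀ * D = ((k : ℤ) - (l : ℤ)) • 1 + (l : ℤ) • Matrix.of fun _ _ => (1 : ℤ)) :
    ∃ x y z : ℤ, (x, y, z) ≠ (0, 0, 0) ∧
      z ^ 2 = ((k : ℤ) - (l : ℤ)) * x ^ 2 + (-1) ^ ((v - 1) / 2) * (l : ℤ) * y ^ 2 := by
  have hv2 : v % 2 = 1 := Nat.odd_iff.mp hv
  -- trivial case n = 0
  by_cases hn0 : (k : ℤ) - l = 0
  · exact ⟨1, 0, 0, by simp, by rw [hn0]; ring⟩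
  -- trivial case v = 1
  by_cases hv1 : v = 1
  · subst hv1
    refine ⟨1, 1, D 0 0, by simp, ?_⟩
    have hh := congrFun (congrFun hD 0) 0
    rw [Matrix.mul_apply, Fin.sum_univ_one] at hh
    simp only [Matrix.transpose_apply, Matrix.add_apply, Matrix.smul_apply,
      Matrix.one_apply_eq, Matrix.of_apply, smul_eq_mul, mul_one] at hh
    rw [sq, hh]
    norm_num
  -- main case
  have hv3 : 3 ≤ v := by omega
  set nq : ℚ := (k : ℚ) - l with hnq
  set Dq : Matrix (Fin v) (Fin v) ℚ := Matrix.of (fun i j => ((D i j : ℤ) : ℚ)) with hDqdef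
  have hDD : ∀ i i', (∑ j, Dq j i * Dq j i') = nq * (if i = i' then 1 else 0) + (l : ℚ) := by
    intro i i'
    have hh := congrFun (congrFun hD i) i'
    rw [Matrix.mul_apply] at hh
    simp only [Matrix.transpose_apply, Matrix.add_apply, Matrix.smul_apply,
      Matrix.one_apply, Matrix.of_apply, smul_eq_mul, mul_one] at hh
    have hc := congrArg (fun z : ℤ => (z : ℚ)) hh
    push_cast at hc
    simp only [hDqdef, Matrix.of_apply, hnq]
    rw [hc]
  -- nonnegativity of nq
  have hnqne : nq ≠ 0 := by
    rw [hnq]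
    intro h
    apply hn0
    have hkl : (k : ℚ) = l := by linarith [sub_eq_zero.mp h]
    have : (k : ℕ) = l := by exact_mod_cast hkl
    simp [this]
  -- nonnegativity of nq via a test vector
  have hnqpos : 0 < nq := by
    rcases lt_or_ge 0 nq with h | h
    · exact h
    set i0 : Fin v := ⟨0, by omega⟩ with hi0
    set i1 : Fin v := ⟨1, by omega⟩ with hi1
    have hne01 : i0 ≠ i1 := by simp [hi0, hi1, Fin.ext_iff]
    set u0 : Fin v → ℚ := fun i => (if i = i0 then (1:ℚ) else 0) - (if i = i1 then 1 else 0)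
      with hu0
    have hsum0 : (∑ i, u0 i) = 0 := by
      simp only [hu0]
      rw [Finset.sum_sub_distrib]
      simp [Finset.sum_ite_eq']
    have hsq0 : (∑ i, (u0 i) ^ 2) = 2 := by
      have hpt : ∀ i, (u0 i) ^ 2 = (if i = i0 then (1:ℚ) else 0) + (if i = i1 then 1 else 0) := by
        intro i
        by_cases h0 : i = i0
        · have h1 : i ≠ i1 := by rw [h0]; exact hne01
          simp [hu0, h0, h1, hne01]
        · by_cases h1 : i = i1 <;> simp [hu0, h0, h1, Ne.symm hne01] <;> norm_num
      rw [Finset.sum_congr rfl (fun i _ => hpt i), Finset.sum_add_distrib]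
      simp [Finset.sum_ite_eq']
      norm_num
    have hval := brc_sum_sq Dq nq (l : ℚ) hDD u0
    rw [hsum0, hsq0] at hval
    have hpos : (0:ℚ) ≤ ∑ j, (Dq.mulVec u0 j) ^ 2 :=
      Finset.sum_nonneg (fun j _ => sq_nonneg _)
    have hz : nq = 0 := by nlinarith [hval, hpos]
    exact absurd hz hnqne
  -- Lagrange four squares
  obtain ⟨a, b, c, d, habcd⟩ := Nat.sum_four_squares ((k:ℤ) - l).toNat
  have hq4 : ((a:ℚ))^2 + (b:ℚ)^2 + (c:ℚ)^2 + (d:ℚ)^2 = nq := by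
    have h1 : ((((k:ℤ) - l).toNat : ℤ) : ℚ) = nq := by
      have hzn : (0:ℤ) ≤ (k:ℤ) - l := by
        have h2 := hnqpos.le
        rw [hnq] at h2
        exact_mod_cast h2
      rw [Int.toNat_of_nonneg hzn]
      push_cast
      rw [hnq]
    rw [← h1, ← habcd]
    push_cast
    ring
  have hv4 : v % 4 = 1 ∨ v % 4 = 3 := by omega
  rcases hv4 with hv4 | hv4
  · -- v ≡ 1 (mod 4)
    obtain ⟨m, rfl⟩ : ∃ m, v = m + 1 := ⟨v - 1, by omega⟩
    obtain ⟨E, hE⟩ := brc_exists_E' m (by omega) (a:ℚ) b c d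
    rw [hq4] at hE
    have hEinv : E * E⁻¹ = 1 := brc_mul_inv E nq hnqne hE
    set f : Matrix (Fin m) (Fin (m+1)) ℚ :=
      Matrix.of (fun i j => Fin.lastCases (Dq i.castSucc (Fin.last m))
        (fun j' => ∑ p, Dq i.castSucc p.castSucc * E⁻¹ p j') j) with hfdef
    obtain ⟨y, hy1, hy2⟩ := brc_elim m f
    set y' : Fin m → ℚ := fun j => y j.castSucc with hy'def
    set x' : Fin m → ℚ := E⁻¹.mulVec y' with hx'def
    set u : Fin (m+1) → ℚ := Fin.snoc x' (y (Fin.last m)) with hudef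
    have hE0x : E.mulVec x' = y' := by
      rw [hx'def, Matrix.mulVec_mulVec, hEinv, Matrix.one_mulVec]
    have hfu : ∀ i : Fin m, f.mulVec y i = Dq.mulVec u i.castSucc := by
      intro i
      have L : f.mulVec y i
          = (∑ j' : Fin m, ∑ p, Dq i.castSucc p.castSucc * E⁻¹ p j' * y j'.castSucc)
            + Dq i.castSucc (Fin.last m) * y (Fin.last m) := by
        rw [Matrix.mulVec, dotProduct, Fin.sum_univ_castSucc]
        simp only [hfdef, Matrix.of_apply, Fin.lastCases_castSucc, Fin.lastCases_last,
          Finset.sum_mul]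
      have R : Dq.mulVec u i.castSucc
          = (∑ p : Fin m, ∑ j' : Fin m, Dq i.castSucc p.castSucc * E⁻¹ p j' * y j'.castSucc)
            + Dq i.castSucc (Fin.last m) * y (Fin.last m) := by
        rw [Matrix.mulVec, dotProduct, Fin.sum_univ_castSucc]
        congr 1
        · apply Finset.sum_congr rfl
          intro p _
          have hup : u p.castSucc = ∑ j', E⁻¹ p j' * y j'.castSucc := by
            rw [hudef, Fin.snoc_castSucc]
            rfl
          rw [hup, Finset.mul_sum]
          apply Finset.sum_congr rfl
          intro j' _
          ring
        · rw [hudef, Fin.snoc_last]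
      rw [L, R, Finset.sum_comm]
    have hEq : ∀ i i', (∑ j, E j i * E j i') = nq * (if i = i' then 1 else 0) + 0 := by
      intro i i'
      have hh := congrFun (congrFun hE i) i'
      rw [Matrix.mul_apply] at hh
      simp only [Matrix.transpose_apply, Matrix.smul_apply, Matrix.one_apply,
        smul_eq_mul] at hh
      rw [hh, add_zero]
    have S1 := brc_sum_sq E nq 0 hEq x'
    rw [hE0x] at S1
    have S3 := brc_sum_sq Dq nq (l:ℚ) hDD u
    have SL : (∑ j : Fin (m+1), (Dq.mulVec u j)^2)
        = (∑ j : Fin m, (y' j)^2) + (Dq.mulVec u (Fin.last m))^2 := by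
      rw [Fin.sum_univ_castSucc]
      congr 1
      apply Finset.sum_congr rfl
      intro j _
      rw [← hfu j, hy2 j]
    have SU : (∑ p : Fin (m+1), (u p)^2) = (∑ p : Fin m, (x' p)^2) + 1 := by
      have h1 : ∀ p : Fin m, u p.castSucc = x' p := fun p => by
        rw [hudef, Fin.snoc_castSucc]
      have h2 : u (Fin.last m) = 1 := by rw [hudef, Fin.snoc_last, hy1]
      rw [Fin.sum_univ_castSucc, h2]
      simp_rw [h1]
      norm_num
    have S2' : nq * (∑ p : Fin (m+1), (u p)^2)
        = nq * (∑ p : Fin m, (x' p)^2) + nq := by rw [SU]; ring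
    rw [SL] at S3
    have final : (Dq.mulVec u (Fin.last m))^2 = nq + (l:ℚ) * (∑ p, u p)^2 := by
      linarith [S1, S3, S2']
    have hsgn : ((-1 : ℤ)) ^ (((m+1) - 1)/2) = 1 :=
      Even.neg_one_pow (by rw [Nat.even_iff]; omega)
    obtain ⟨X, Y, Z, hXYZ, hEqn⟩ :=
      brc_ratClear ((k:ℤ) - l) (l:ℤ) (Dq.mulVec u (Fin.last m)) 1 (∑ p, u p)
        (by simp)
        (by push_cast; rw [← hnq]; linear_combination final)
    refine ⟨X, Y, Z, hXYZ, ?_⟩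
    rw [hsgn]
    linear_combination hEqn
  · -- v ≡ 3 (mod 4)
    obtain ⟨E, hE⟩ := brc_exists_E' (v+1) (by omega) (a:ℚ) b c d
    rw [hq4] at hE
    have hEinv : E * E⁻¹ = 1 := brc_mul_inv E nq hnqne hE
    set f : Matrix (Fin v) (Fin (v+1)) ℚ :=
      Matrix.of (fun i j => ∑ p, Dq i p * E⁻¹ p.castSucc j) with hfdef
    obtain ⟨y, hy1, hy2⟩ := brc_elim v f
    set x : Fin (v+1) → ℚ := E⁻¹.mulVec y with hxdef
    set u : Fin v → ℚ := fun p => x p.castSucc with hudef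
    have hfu : ∀ i, f.mulVec y i = Dq.mulVec u i := by
      intro i
      have L : f.mulVec y i = ∑ p : Fin v, ∑ j : Fin (v+1),
          Dq i p * E⁻¹ p.castSucc j * y j := by
        rw [Matrix.mulVec, dotProduct]
        simp only [hfdef, Matrix.of_apply, Finset.sum_mul]
        rw [Finset.sum_comm]
      have R : Dq.mulVec u i = ∑ p : Fin v, ∑ j : Fin (v+1),
          Dq i p * E⁻¹ p.castSucc j * y j := by
        rw [Matrix.mulVec, dotProduct]
        apply Finset.sum_congr rfl
        intro p _
        have hup : u p = ∑ j, E⁻¹ p.castSucc j * y j := rfl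
        rw [hup, Finset.mul_sum]
        apply Finset.sum_congr rfl
        intro j _
        ring
      rw [L, R]
    have hxy : E.mulVec x = y := by
      rw [hxdef, Matrix.mulVec_mulVec, hEinv, Matrix.one_mulVec]
    have hEq : ∀ i i', (∑ j, E j i * E j i') = nq * (if i = i' then 1 else 0) + 0 := by
      intro i i'
      have hh := congrFun (congrFun hE i) i'
      rw [Matrix.mul_apply] at hh
      simp only [Matrix.transpose_apply, Matrix.smul_apply, Matrix.one_apply,
        smul_eq_mul] at hh
      rw [hh, add_zero]
    have S1 := brc_sum_sq E nq 0 hEq x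
    rw [hxy] at S1
    have S3 := brc_sum_sq Dq nq (l:ℚ) hDD u
    have S4 : (∑ j, (Dq.mulVec u j)^2) = ∑ j : Fin v, (y j.castSucc)^2 :=
      Finset.sum_congr rfl (fun j _ => by rw [← hfu j, hy2 j])
    have S2' : nq * (∑ i : Fin (v+1), (x i)^2)
        = nq * (∑ p : Fin v, (u p)^2) + nq * (x (Fin.last v))^2 := by
      rw [Fin.sum_univ_castSucc]; ring
    have S5 : (∑ i : Fin (v+1), (y i)^2) = (∑ j : Fin v, (y j.castSucc)^2) + 1 := by
      rw [Fin.sum_univ_castSucc, hy1]; norm_num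
    have final : (1:ℚ) = nq * (x (Fin.last v))^2 - (l:ℚ) * (∑ p, u p)^2 := by
      linarith [S1, S2', S3, S4, S5]
    have hsgn : ((-1 : ℤ)) ^ ((v - 1)/2) = -1 :=
      Odd.neg_one_pow (by rw [Nat.odd_iff]; omega)
    obtain ⟨X, Y, Z, hXYZ, hEqn⟩ :=
      brc_ratClear ((k:ℤ) - l) (-(l:ℤ)) 1 (x (Fin.last v)) (∑ p, u p)
        (by simp)
        (by push_cast; rw [← hnq]; linear_combination final)
    refine ⟨X, Y, Z, hXYZ, ?_⟩
    rw [hsgn]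
    linear_combination hEqn
end

section
/- Suppose the incidence matrix M of a symmetric (v,k,λ) design decomposes as M = M₁ + M₂ where M_i is the incidence matrix of a symmetric (v,k_i,λ_i) design. Then k = k₁ + k₂, λ = λ₁ + λ₂ + α where α = 2k₁k₂/(v−1) is an integer, and M₁M₂ᵀ + M₂M₁ᵀ = α(J − I). -/
open Matrix

/- `IsDesign v k l N`: `N` is the incidence matrix of a symmetric `(v,k,l)` design. -/
def IsDesign (v k l : ℕ) (N : Matrix (Fin v) (Fin v) ℤ) : Prop :=
  (∀ i j, N i j = 0 ∨ N i j = 1) ∧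
  Nᵀ * N = ((k : ℤ) - (l : ℤ)) • 1 + (l : ℤ) • Matrix.of (fun _ _ => (1 : ℤ)) ∧
  N * Nᵀ = ((k : ℤ) - (l : ℤ)) • 1 + (l : ℤ) • Matrix.of (fun _ _ => (1 : ℤ)) ∧
  k * (k - 1) = (v - 1) * l

theorem design_decomposition (v k k1 k2 l l1 l2 : ℕ) (hv : 2 ≤ v)
    (M M1 M2 : Matrix (Fin v) (Fin v) ℤ)
    (hM : IsDesign v k l M) (hM1 : IsDesign v k1 l1 M1) (hM2 : IsDesign v k2 l2 M2)
    (hsum : M = M1 + M2)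
    (hdisj : ∀ i j, M1 i j = 0 ∨ M2 i j = 0) :
    k = k1 + k2 ∧
    ∃ α : ℤ, α * ((v : ℤ) - 1) = 2 * (k1 : ℤ) * (k2 : ℤ) ∧
      (l : ℤ) = (l1 : ℤ) + (l2 : ℤ) + α ∧
      M1 * M2ᵀ + M2 * M1ᵀ = α • (Matrix.of (fun _ _ => (1 : ℤ)) - 1) := by
  obtain ⟨h01, hMt, hMM, hk⟩ := hM
  obtain ⟨h011, hMt1, hMM1, hk1⟩ := hM1
  obtain ⟨h012, hMt2, hMM2, hk2⟩ := hM2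
  set J : Matrix (Fin v) (Fin v) ℤ := Matrix.of (fun _ _ => (1 : ℤ)) with hJ
  -- cast the counting identities to ℤ
  have cast_id : ∀ a b : ℕ, a * (a - 1) = (v - 1) * b →
      (a : ℤ) * ((a : ℤ) - 1) = ((v : ℤ) - 1) * (b : ℤ) := by
    intro a b h
    rcases Nat.eq_zero_or_pos a with h0 | h0
    · subst h0
      simp only [Nat.zero_mul] at h
      have hb : b = 0 := by
        rcases Nat.mul_eq_zero.mp h.symm with h' | h'
        · omega
        · exact h'
      subst hb; simp
    · have := congrArg (Nat.cast : ℕ → ℤ) h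
      push_cast [Nat.cast_sub h0, Nat.cast_sub (show 1 ≤ v by omega)] at this
      linarith
  have hkZ := cast_id k l hk
  have hk1Z := cast_id k1 l1 hk1
  have hk2Z := cast_id k2 l2 hk2
  -- expansion of the cross terms
  have hexp : M1 * M2ᵀ + M2 * M1ᵀ =
      (((k : ℤ) - l) - ((k1 : ℤ) - l1) - ((k2 : ℤ) - l2)) • 1 +
        ((l : ℤ) - l1 - l2) • J := by
    have h1 : M1 * M2ᵀ + M2 * M1ᵀ = M * Mᵀ - M1 * M1ᵀ - M2 * M2ᵀ := by
      rw [hsum, transpose_add]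
      noncomm_ring
    rw [h1, hMM, hMM1, hMM2]
    module
  -- diagonal entry vanishes
  have i0 : Fin v := ⟨0, by omega⟩
  have hdiag : (M1 * M2ᵀ + M2 * M1ᵀ) i0 i0 = 0 := by
    simp only [Matrix.add_apply, Matrix.mul_apply, Matrix.transpose_apply]
    rw [Finset.sum_eq_zero, Finset.sum_eq_zero, add_zero]
    · intro j _
      rcases hdisj i0 j with h | h <;> simp [h]
    · intro j _
      rcases hdisj i0 j with h | h <;> simp [h]
  -- evaluate the expansion at the diagonal
  have hkk : (k : ℤ) = (k1 : ℤ) + k2 := by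
    have := congrArg (fun A => A i0 i0) hexp
    simp only [hdiag, Matrix.add_apply, Matrix.smul_apply, Matrix.one_apply_eq,
      Matrix.of_apply, smul_eq_mul, mul_one, hJ] at this
    linarith
  have hknat : k = k1 + k2 := by exact_mod_cast hkk
  refine ⟨hknat, (l : ℤ) - l1 - l2, ?_, by ring, ?_⟩
  · rw [hkk] at hkZ
    linear_combination hk1Z + hk2Z - hkZ
  · rw [hexp]
    have hc : ((k : ℤ) - l) - ((k1 : ℤ) - l1) - ((k2 : ℤ) - l2) =
        -((l : ℤ) - l1 - l2) := by rw [hkk]; ring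
    rw [hc]
    module
end
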